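/- Let v̄ be a tuple of b pairwise distinct complex numbers and let 0 ≤ n ≤ b. Let {v̄_α, v̄_ᾱ} and {v̄_β, v̄_β̄} be two partitions of v̄ into disjoint subsets with |v̄_α| = |v̄_β| = n (so |v̄_ᾱ| = |v̄_β̄| = b−n). Assume all parameters are generic so that every denominator below is nonzero. Then K(v̄_α | v̄_β + c) = (−1)^b · K(v̄_β̄ − c | v̄_ᾱ), where v̄±c denotes the tuple with every element shifted by ±c. -/

import Mathlib

open scoped BigOperators

/-- The rational function `g(x,y) = c/(x-y)`. -/
noncomputable def gG (c x y : ℂ) : ℂ := c / (x - y)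

/-- The rational function `f(x,y) = (x-y+c)/(x-y)`. -/
noncomputable def fF (c x y : ℂ) : ℂ := (x - y + c) / (x - y)

/-- The rational function `h(x,y) = (x-y+c)/c`. -/
noncomputable def hH (c x y : ℂ) : ℂ := (x - y + c) / c

/-- A two-argument function applied to tuples denotes the product over all elements. -/
noncomputable def pF (F : ℂ → ℂ → ℂ) (U V : List ℂ) : ℂ :=
  (U.map fun x => (V.map fun y => F x y).prod).prod

/-- The domain-wall partition function `K(ū|v̄) = Δ'(ū)·Δ(v̄)·h(ū,v̄)·det(g(u_j,v_k)/h(u_j,v_k))`,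
written in the equivalent (rational-continuation) form in which the prefactor `h(ū,v̄)` is
distributed over the rows of the determinant:
`K(ū|v̄) = Δ'(ū)·Δ(v̄)·det( g(u_j,v_k)·∏_{k'≠k} h(u_j,v_{k'}) )`.
For tuples of equal length `n` with all denominators nonzero this coincides with the literal
formula, and `K(∅|∅) = 1`. -/
noncomputable def Kd (c : ℂ) (U V : List ℂ) : ℂ :=
  (∏ j : Fin U.length, ∏ k : Fin U.length,
      if (j : ℕ) < (k : ℕ) then gG c (U.get j) (U.get k) else 1) *
  (∏ j : Fin V.length, ∏ k : Fin V.length,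
      if (k : ℕ) < (j : ℕ) then gG c (V.get j) (V.get k) else 1) *
  Matrix.det (Matrix.of fun j k : Fin U.length =>
    gG c (U.get j) (V.getD (k : ℕ) 0) *
      ∏ k' : Fin U.length, if k' = k then 1 else hH c (U.get j) (V.getD (k' : ℕ) 0))

/-- The sub-tuple of a tuple `L` selected by a set `A` of positions (in increasing order). -/
noncomputable def subL (L : List ℂ) (A : Finset (Fin L.length)) : List ℂ :=
  (A.sort (· ≤ ·)).map L.get

/-- Genericity of a family of parameters: all members are pairwise distinct and no difference
of two members equals `±c`, so that every denominator occurring (also after shifts by `±c`)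
is nonzero. -/
def Generic (c : ℂ) (L : List ℂ) : Prop :=
  L.Pairwise fun x y => x ≠ y ∧ x - y ≠ c ∧ x - y ≠ -c

noncomputable def Kf (c : ℂ) (m : ℕ) (u v : Fin m → ℂ) : ℂ :=
  (∏ j : Fin m, ∏ k : Fin m, if (j : ℕ) < (k : ℕ) then gG c (u j) (u k) else 1) *
  (∏ j : Fin m, ∏ k : Fin m, if (k : ℕ) < (j : ℕ) then gG c (v j) (v k) else 1) *
  Matrix.det (Matrix.of fun j k : Fin m =>
    gG c (u j) (v k) * ∏ k' : Fin m, if k' = k then 1 else hH c (u j) (v k'))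
lemma Kd_eq_Kf (c : ℂ) (U V : List ℂ) (h : V.length = U.length) :
    Kd c U V = Kf c U.length U.get (fun k => V.get (Fin.cast h.symm k)) := by
  unfold Kd Kf
  congr 1
  · congr 1
    refine Fintype.prod_equiv (finCongr h) _ _ fun j => ?_
    refine Fintype.prod_equiv (finCongr h) _ _ fun k => ?_
    simp [Fin.cast]
  · refine congrArg Matrix.det ?_
    ext j k
    have hk : (k : ℕ) < V.length := by rw [h]; exact k.isLt
    simp only [Matrix.of_apply]
    rw [List.getD_eq_getElem (hn := hk)]
    congr 1
    refine Finset.prod_congr rfl fun k' _ => ?_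
    have hk' : (k' : ℕ) < V.length := by rw [h]; exact k'.isLt
    rw [List.getD_eq_getElem (hn := hk')]
    rfl
lemma gG_shift (c t x y : ℂ) : gG c (x + t) (y + t) = gG c x y := by
  unfold gG; ring_nf

lemma hH_shift (c t x y : ℂ) : hH c (x + t) (y + t) = hH c x y := by
  unfold hH; ring_nf

lemma Kf_translate (c t : ℂ) (m : ℕ) (u v : Fin m → ℂ) :
    Kf c m (fun j => u j + t) (fun k => v k + t) = Kf c m u v := by
  unfold Kf
  simp only [gG_shift, hH_shift]

lemma Kf_cast (c : ℂ) {m m' : ℕ} (h : m = m') (u v : Fin m → ℂ) :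
    Kf c m u v = Kf c m' (u ∘ Fin.cast h.symm) (v ∘ Fin.cast h.symm) := by
  subst h; rfl
lemma ite_prod_Ioi {m : ℕ} (f : Fin m → Fin m → ℂ) :
    (∏ j : Fin m, ∏ k : Fin m, if (j : ℕ) < (k : ℕ) then f j k else 1)
      = ∏ j : Fin m, ∏ k ∈ Finset.Ioi j, f j k := by
  refine Finset.prod_congr rfl fun j _ => ?_
  rw [← Finset.prod_filter]
  congr 1
  ext k
  simp only [Finset.mem_filter, Finset.mem_univ, true_and, Finset.mem_Ioi, Fin.lt_def]

lemma ite_prod_Iio {m : ℕ} (f : Fin m → Fin m → ℂ) :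
    (∏ j : Fin m, ∏ k : Fin m, if (k : ℕ) < (j : ℕ) then f j k else 1)
      = ∏ j : Fin m, ∏ k ∈ Finset.Ioi j, f k j := by
  rw [Finset.prod_comm]
  refine Finset.prod_congr rfl fun j _ => ?_
  rw [← Finset.prod_filter]
  congr 1
  ext k
  simp only [Finset.mem_filter, Finset.mem_univ, true_and, Finset.mem_Ioi, Fin.lt_def]

lemma diffProd_perm {m : ℕ} (u : Fin m → ℂ) (σ : Equiv.Perm (Fin m)) :
    ∏ j : Fin m, ∏ k ∈ Finset.Ioi j, (u (σ j) - u (σ k))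
      = ((Equiv.Perm.sign σ : ℤ) : ℂ) * ∏ j : Fin m, ∏ k ∈ Finset.Ioi j, (u j - u k) := by
  have key : ∀ w : Fin m → ℂ, (∏ j : Fin m, ∏ k ∈ Finset.Ioi j, (w j - w k))
      = Matrix.det (Matrix.vandermonde (fun x => - w x)) := by
    intro w
    rw [Matrix.det_vandermonde]
    refine Finset.prod_congr rfl fun j _ => Finset.prod_congr rfl fun k _ => by ring
  have h2 : Matrix.vandermonde (fun x => - u (σ x))
      = (Matrix.vandermonde (fun x => - u x)).submatrix σ id := by
    ext i j; simp [Matrix.vandermonde]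
  rw [key (fun x => u (σ x)), key u, h2, Matrix.det_permute]

lemma sign_sq (σ : Equiv.Perm (Fin m)) :
    ((Equiv.Perm.sign σ : ℤ) : ℂ) * ((Equiv.Perm.sign σ : ℤ) : ℂ) = 1 := by
  have := Int.units_mul_self (Equiv.Perm.sign σ)
  norm_cast
  rw [this]
  rfl

lemma gG_prefactor_perm {m : ℕ} (u : Fin m → ℂ) (hu : Function.Injective u)
    (σ : Equiv.Perm (Fin m)) (c : ℂ) :
    (∏ j : Fin m, ∏ k : Fin m, if (j : ℕ) < (k : ℕ) then gG c (u (σ j)) (u (σ k)) else 1)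
      = ((Equiv.Perm.sign σ : ℤ) : ℂ) *
        ∏ j : Fin m, ∏ k : Fin m, if (j : ℕ) < (k : ℕ) then gG c (u j) (u k) else 1 := by
  rw [ite_prod_Ioi, ite_prod_Ioi]
  have hP : ∀ w : Fin m → ℂ, Function.Injective w →
      (∏ j : Fin m, ∏ k ∈ Finset.Ioi j, (w j - w k)) ≠ 0 := by
    intro w hw
    rw [Finset.prod_ne_zero_iff]
    intro j _
    rw [Finset.prod_ne_zero_iff]
    intro k hk
    have : j ≠ k := ne_of_lt (Finset.mem_Ioi.mp hk)
    exact sub_ne_zero.mpr fun h => this (hw h)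
  have expand : ∀ w : Fin m → ℂ,
      (∏ j : Fin m, ∏ k ∈ Finset.Ioi j, gG c (w j) (w k))
        = (∏ j : Fin m, ∏ k ∈ Finset.Ioi j, c) / (∏ j : Fin m, ∏ k ∈ Finset.Ioi j, (w j - w k)) := by
    intro w
    rw [← Finset.prod_div_distrib]
    refine Finset.prod_congr rfl fun j _ => ?_
    rw [← Finset.prod_div_distrib]
    rfl
  rw [expand (fun x => u (σ x)), expand u]
  rw [diffProd_perm u σ]
  set s := ((Equiv.Perm.sign σ : ℤ) : ℂ) with hs
  set C := (∏ _j : Fin m, ∏ _k ∈ Finset.Ioi _j, c) with hC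
  set P := (∏ j : Fin m, ∏ k ∈ Finset.Ioi j, (u j - u k)) with hPdef
  have hPne : P ≠ 0 := hP u hu
  have hsne : s ≠ 0 := by
    intro h
    have := sign_sq σ
    rw [← hs, h] at this
    simp at this
  rw [div_eq_iff (by exact mul_ne_zero hsne hPne)]
  have h2 : s * s = 1 := sign_sq σ
  field_simp
  ring_nf
  rw [sq, h2, mul_one]

lemma gG_neg (c x y : ℂ) : gG c x y = gG c (-y) (-x) := by
  unfold gG; ring_nf

lemma Kf_perm (c : ℂ) (m : ℕ) (u v : Fin m → ℂ)
    (hu : Function.Injective u) (hv : Function.Injective v)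
    (σ τ : Equiv.Perm (Fin m)) :
    Kf c m (u ∘ σ) (v ∘ τ) = Kf c m u v := by
  unfold Kf
  set s := ((Equiv.Perm.sign σ : ℤ) : ℂ) with hs
  set t := ((Equiv.Perm.sign τ : ℤ) : ℂ) with ht
  have hA : (∏ j : Fin m, ∏ k : Fin m,
        if (j : ℕ) < (k : ℕ) then gG c ((u ∘ σ) j) ((u ∘ σ) k) else 1)
      = s * ∏ j : Fin m, ∏ k : Fin m, if (j : ℕ) < (k : ℕ) then gG c (u j) (u k) else 1 :=
    gG_prefactor_perm u hu σ c
  have hvneg : Function.Injective (fun x => - v x) := fun a b h => hv (by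
    have : -v a = -v b := h
    linear_combination -this)
  have hB : (∏ j : Fin m, ∏ k : Fin m,
        if (k : ℕ) < (j : ℕ) then gG c ((v ∘ τ) j) ((v ∘ τ) k) else 1)
      = t * ∏ j : Fin m, ∏ k : Fin m, if (k : ℕ) < (j : ℕ) then gG c (v j) (v k) else 1 := by
    have conv1 : ∀ w : Fin m → ℂ, (∏ j : Fin m, ∏ k : Fin m,
        if (k : ℕ) < (j : ℕ) then gG c (w j) (w k) else 1)
        = ∏ j : Fin m, ∏ k : Fin m,
            if (j : ℕ) < (k : ℕ) then gG c (- w j) (- w k) else 1 := by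
      intro w
      rw [ite_prod_Iio, ite_prod_Ioi]
      exact Finset.prod_congr rfl fun j _ => Finset.prod_congr rfl fun k _ => gG_neg c _ _
    rw [conv1 (v ∘ τ), conv1 v]
    exact gG_prefactor_perm (fun x => - v x) hvneg τ c
  have hD : Matrix.det (Matrix.of fun j k : Fin m =>
        gG c ((u ∘ σ) j) ((v ∘ τ) k)
          * ∏ k' : Fin m, if k' = k then 1 else hH c ((u ∘ σ) j) ((v ∘ τ) k'))
      = t * (s * Matrix.det (Matrix.of fun j k : Fin m =>
          gG c (u j) (v k) * ∏ k' : Fin m, if k' = k then 1 else hH c (u j) (v k'))) := by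
    have hmat : (Matrix.of fun j k : Fin m =>
        gG c ((u ∘ σ) j) ((v ∘ τ) k)
          * ∏ k' : Fin m, if k' = k then 1 else hH c ((u ∘ σ) j) ((v ∘ τ) k'))
        = ((Matrix.of fun j k : Fin m =>
          gG c (u j) (v k) * ∏ k' : Fin m, if k' = k then 1 else hH c (u j) (v k')).submatrix
            σ id).submatrix id τ := by
      ext j k
      simp only [Matrix.submatrix_apply, Matrix.of_apply, Function.comp_apply, id_eq]
      congr 1
      rw [← Equiv.prod_comp τ (fun k'' => if k'' = τ k then 1 else hH c (u (σ j)) (v k''))]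
      refine Finset.prod_congr rfl fun k' _ => ?_
      congr 1
      simp [Equiv.apply_eq_iff_eq]
    rw [hmat, Matrix.det_permute', Matrix.det_permute]
  rw [hA, hB, hD]
  have h2s : s * s = 1 := sign_sq σ
  have h2t : t * t = 1 := sign_sq τ
  ring_nf
  rw [sq, sq, h2s, h2t]
  ring
lemma Kf_reduce (c : ℂ) (hc : c ≠ 0) (m : ℕ) (w : ℂ) (u v : Fin m → ℂ)
    (hu : ∀ j, u j ≠ w - c) (hv : ∀ k, v k ≠ w) :
    Kf c (m+1) ((Fin.cons (w-c) u : Fin (m+1) → ℂ)) ((Fin.cons w v : Fin (m+1) → ℂ)) = - Kf c m u v := by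
  unfold Kf
  set A := ∏ j : Fin m, ∏ k : Fin m, if (j : ℕ) < (k : ℕ) then gG c (u j) (u k) else 1 with hAdef
  set B := ∏ j : Fin m, ∏ k : Fin m, if (k : ℕ) < (j : ℕ) then gG c (v j) (v k) else 1 with hBdef
  set D := Matrix.det (Matrix.of fun j k : Fin m =>
    gG c (u j) (v k) * ∏ k' : Fin m, if k' = k then 1 else hH c (u j) (v k')) with hDdef
  have hA' : (∏ j : Fin (m+1), ∏ k : Fin (m+1),
      if (j : ℕ) < (k : ℕ) then gG c ((Fin.cons (w-c) u : Fin (m+1) → ℂ) j) ((Fin.cons (w-c) u : Fin (m+1) → ℂ) k) else 1)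
      = (∏ k : Fin m, gG c (w-c) (u k)) * A := by
    rw [Fin.prod_univ_succ]
    congr 1
    · rw [Fin.prod_univ_succ]
      simp
    · rw [hAdef]
      refine Finset.prod_congr rfl fun j _ => ?_
      rw [Fin.prod_univ_succ]
      simp [Nat.succ_lt_succ_iff]
  have hB' : (∏ j : Fin (m+1), ∏ k : Fin (m+1),
      if (k : ℕ) < (j : ℕ) then gG c ((Fin.cons w v : Fin (m+1) → ℂ) j) ((Fin.cons w v : Fin (m+1) → ℂ) k) else 1)
      = (∏ j : Fin m, gG c (v j) w) * B := by
    rw [Fin.prod_univ_succ]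
    have h0 : (∏ k : Fin (m+1), if (k : ℕ) < ((0 : Fin (m+1)) : ℕ) then
        gG c ((Fin.cons w v : Fin (m+1) → ℂ) 0) ((Fin.cons w v : Fin (m+1) → ℂ) k) else 1) = 1 := by
      simp
    rw [h0, one_mul, ← Finset.prod_mul_distrib]
    refine Finset.prod_congr rfl fun j _ => ?_
    rw [Fin.prod_univ_succ]
    simp [Nat.succ_lt_succ_iff]
  have hD' : Matrix.det (Matrix.of fun j k : Fin (m+1) =>
      gG c ((Fin.cons (w-c) u : Fin (m+1) → ℂ) j) ((Fin.cons w v : Fin (m+1) → ℂ) k) *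
        ∏ k' : Fin (m+1), if k' = k then 1 else hH c ((Fin.cons (w-c) u : Fin (m+1) → ℂ) j) ((Fin.cons w v : Fin (m+1) → ℂ) k'))
      = (-1) * (∏ k : Fin m, hH c (w-c) (v k)) * ((∏ j : Fin m, hH c (u j) w) * D) := by
    rw [Matrix.det_succ_row_zero]
    rw [Fin.sum_univ_succ]
    have hzero : ∀ k : Fin m, (Matrix.of fun j k : Fin (m+1) =>
        gG c ((Fin.cons (w-c) u : Fin (m+1) → ℂ) j) ((Fin.cons w v : Fin (m+1) → ℂ) k) *
          ∏ k' : Fin (m+1), if k' = k then 1 else hH c ((Fin.cons (w-c) u : Fin (m+1) → ℂ) j) ((Fin.cons w v : Fin (m+1) → ℂ) k'))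
          0 k.succ = 0 := by
      intro k
      simp only [Matrix.of_apply, Fin.cons_zero]
      have : (∏ k' : Fin (m+1), if k' = k.succ then 1
          else hH c (w-c) ((Fin.cons w v : Fin (m+1) → ℂ) k')) = 0 := by
        apply Finset.prod_eq_zero (Finset.mem_univ (0 : Fin (m+1)))
        rw [if_neg (Fin.succ_ne_zero k).symm]
        simp only [Fin.cons_zero, hH]
        rw [show w - c - w + c = 0 by ring, zero_div]
      rw [this, mul_zero]
    have hsum0 : (∑ k : Fin m, (-1 : ℂ) ^ ((k.succ : Fin (m+1)) : ℕ) *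
        (Matrix.of fun j k : Fin (m+1) =>
          gG c ((Fin.cons (w-c) u : Fin (m+1) → ℂ) j) ((Fin.cons w v : Fin (m+1) → ℂ) k) *
            ∏ k' : Fin (m+1), if k' = k then 1 else hH c ((Fin.cons (w-c) u : Fin (m+1) → ℂ) j) ((Fin.cons w v : Fin (m+1) → ℂ) k'))
          0 k.succ *
        Matrix.det ((Matrix.of fun j k : Fin (m+1) =>
          gG c ((Fin.cons (w-c) u : Fin (m+1) → ℂ) j) ((Fin.cons w v : Fin (m+1) → ℂ) k) *
            ∏ k' : Fin (m+1), if k' = k then 1 else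
              hH c ((Fin.cons (w-c) u : Fin (m+1) → ℂ) j) ((Fin.cons w v : Fin (m+1) → ℂ) k')).submatrix
            Fin.succ (k.succ).succAbove)) = 0 := by
      apply Finset.sum_eq_zero
      intro k _
      rw [hzero k, mul_zero, zero_mul]
    rw [hsum0, add_zero]
    have hM00 : (Matrix.of fun j k : Fin (m+1) =>
        gG c ((Fin.cons (w-c) u : Fin (m+1) → ℂ) j) ((Fin.cons w v : Fin (m+1) → ℂ) k) *
          ∏ k' : Fin (m+1), if k' = k then 1 else hH c ((Fin.cons (w-c) u : Fin (m+1) → ℂ) j) ((Fin.cons w v : Fin (m+1) → ℂ) k'))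
        0 0 = (-1) * ∏ k : Fin m, hH c (w-c) (v k) := by
      simp only [Matrix.of_apply, Fin.cons_zero]
      rw [Fin.prod_univ_succ]
      simp only [if_pos rfl, one_mul]
      have hgg : gG c (w-c) w = -1 := by
        unfold gG
        rw [show w - c - w = -c by ring]
        rw [div_neg, div_self hc]
      rw [hgg]
      have hrest : (∏ k : Fin m, if (k.succ : Fin (m+1)) = 0 then (1 : ℂ)
          else hH c (w-c) ((Fin.cons w v : Fin (m+1) → ℂ) k.succ))
          = ∏ k : Fin m, hH c (w-c) (v k) := by
        refine Finset.prod_congr rfl fun k _ => ?_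
        rw [if_neg (Fin.succ_ne_zero k), Fin.cons_succ]
      rw [hrest]
      simp
    have hminor : ((Matrix.of fun j k : Fin (m+1) =>
        gG c ((Fin.cons (w-c) u : Fin (m+1) → ℂ) j) ((Fin.cons w v : Fin (m+1) → ℂ) k) *
          ∏ k' : Fin (m+1), if k' = k then 1 else
            hH c ((Fin.cons (w-c) u : Fin (m+1) → ℂ) j) ((Fin.cons w v : Fin (m+1) → ℂ) k')).submatrix
          Fin.succ ((0 : Fin (m+1)).succAbove))
        = Matrix.of (fun j k : Fin m => hH c (u j) w *
            (gG c (u j) (v k) * ∏ k' : Fin m, if k' = k then 1 else hH c (u j) (v k'))) := by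
      ext j k
      simp only [Matrix.submatrix_apply, Matrix.of_apply, Fin.succAbove_zero, Fin.cons_succ]
      rw [Fin.prod_univ_succ]
      rw [if_neg (Fin.succ_ne_zero k).symm]
      simp only [Fin.cons_zero, Fin.cons_succ]
      have : (∏ k' : Fin m, if k'.succ = k.succ then 1 else hH c (u j) (v k'))
          = ∏ k' : Fin m, if k' = k then 1 else hH c (u j) (v k') := by
        refine Finset.prod_congr rfl fun k' _ => ?_
        congr 1
        simp [Fin.succ_inj]
      rw [this]
      ring
    rw [hM00, hminor]
    rw [show (Matrix.of (fun j k : Fin m => hH c (u j) w *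
        (gG c (u j) (v k) * ∏ k' : Fin m, if k' = k then 1 else hH c (u j) (v k'))))
        = Matrix.of (fun j k : Fin m => (fun i => hH c (u i) w) j *
          (Matrix.of fun j k : Fin m => gG c (u j) (v k) *
            ∏ k' : Fin m, if k' = k then 1 else hH c (u j) (v k')) j k) from rfl]
    rw [Matrix.det_mul_column]
    simp only [Fin.val_zero, pow_zero, mul_one]
    ring
  rw [hA', hB', hD']
  have key1 : (∏ k : Fin m, gG c (w-c) (u k)) * (∏ j : Fin m, hH c (u j) w) = (-1) ^ m := by
    rw [← Finset.prod_mul_distrib]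
    rw [show ((-1 : ℂ) ^ m) = ∏ _j : Fin m, (-1 : ℂ) by simp]
    refine Finset.prod_congr rfl fun j _ => ?_
    have hd : w - c - u j ≠ 0 := sub_ne_zero.mpr (Ne.symm (hu j))
    unfold gG hH
    field_simp
    ring
  have key2 : (∏ j : Fin m, gG c (v j) w) * (∏ k : Fin m, hH c (w-c) (v k)) = (-1) ^ m := by
    rw [← Finset.prod_mul_distrib]
    rw [show ((-1 : ℂ) ^ m) = ∏ _j : Fin m, (-1 : ℂ) by simp]
    refine Finset.prod_congr rfl fun j _ => ?_
    have hd : v j - w ≠ 0 := sub_ne_zero.mpr (hv j)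
    unfold gG hH
    field_simp
    ring
  calc ((∏ k : Fin m, gG c (w-c) (u k)) * A) * ((∏ j : Fin m, gG c (v j) w) * B) *
        ((-1) * (∏ k : Fin m, hH c (w-c) (v k)) * ((∏ j : Fin m, hH c (u j) w) * D))
      = ((∏ k : Fin m, gG c (w-c) (u k)) * (∏ j : Fin m, hH c (u j) w)) *
        ((∏ j : Fin m, gG c (v j) w) * (∏ k : Fin m, hH c (w-c) (v k))) *
        ((-1) * (A * B * D)) := by ring
    _ = (-1 : ℂ) ^ m * (-1 : ℂ) ^ m * ((-1) * (A * B * D)) := by rw [key1, key2]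
    _ = - (A * B * D) := by
        rw [← mul_pow]
        norm_num

lemma get_cons_eq (x : ℂ) (U : List ℂ) :
    ((x :: U).get : Fin (U.length + 1) → ℂ) = Fin.cons x U.get := by
  funext j
  refine Fin.cases ?_ ?_ j <;> simp

lemma Kd_translate (c t : ℂ) (U V : List ℂ) (h : V.length = U.length) :
    Kd c (U.map (· + t)) (V.map (· + t)) = Kd c U V := by
  have h1 : (V.map (· + t)).length = (U.map (· + t)).length := by simp [h]
  rw [Kd_eq_Kf c _ _ h1, Kd_eq_Kf c U V h]
  have h2 : (U.map (· + t)).length = U.length := by simp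
  rw [Kf_cast c h2]
  have e1 : ((U.map (· + t)).get ∘ Fin.cast h2.symm) = fun j => U.get j + t := by
    funext j
    simp [List.get_eq_getElem]
  have e2 : ((fun k => (V.map (· + t)).get (Fin.cast h1.symm k)) ∘ Fin.cast h2.symm)
      = fun k : Fin U.length => V.get (Fin.cast h.symm k) + t := by
    funext k
    simp [List.get_eq_getElem]
  rw [e1, e2]
  exact Kf_translate c t U.length U.get fun k => V.get (Fin.cast h.symm k)

lemma Kd_reduce (c : ℂ) (hc : c ≠ 0) (w : ℂ) (U W : List ℂ) (hlen : W.length = U.length)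
    (hU : ∀ y ∈ U, y ≠ w - c) (hW : ∀ y ∈ W, y ≠ w) :
    Kd c ((w - c) :: U) (w :: W) = - Kd c U W := by
  have hc2 : (w :: W).length = ((w - c) :: U).length := by simp [hlen]
  rw [Kd_eq_Kf c _ _ hc2, Kd_eq_Kf c U W hlen]
  have e1 : (((w - c) :: U).get : Fin (U.length + 1) → ℂ) = Fin.cons (w - c) U.get :=
    get_cons_eq _ _
  have e2 : ((fun k => (w :: W).get (Fin.cast hc2.symm k)) : Fin (U.length + 1) → ℂ)
      = Fin.cons w (fun k : Fin U.length => W.get (Fin.cast hlen.symm k)) := by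
    funext k
    refine Fin.cases ?_ ?_ k <;> simp [Fin.cast]
  calc Kf c ((w - c) :: U).length (((w - c) :: U).get)
        (fun k => (w :: W).get (Fin.cast hc2.symm k))
      = Kf c (U.length + 1) (Fin.cons (w - c) U.get)
          (Fin.cons w (fun k : Fin U.length => W.get (Fin.cast hlen.symm k))) := by
        exact congrArg₂ (Kf c (U.length + 1)) e1 e2
    _ = - Kf c U.length U.get (fun k => W.get (Fin.cast hlen.symm k)) := by
        refine Kf_reduce c hc U.length w U.get _ ?_ ?_
        · exact fun j => hU _ (U.get_mem _)
        · exact fun k => hW _ (W.get_mem _)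

lemma Kd_reduce' (c : ℂ) (hc : c ≠ 0) (x : ℂ) (U W : List ℂ) (hlen : W.length = U.length)
    (hU : ∀ y ∈ U, y ≠ x) (hW : ∀ y ∈ W, y ≠ x + c) :
    Kd c (x :: U) ((x + c) :: W) = - Kd c U W := by
  have := Kd_reduce c hc (x + c) U W hlen (by simpa using hU) hW
  simpa using this

lemma Kd_perm (c : ℂ) (U U' V V' : List ℂ) (hUV : V.length = U.length)
    (hU : U.Nodup) (hV : V.Nodup) (pU : U.Perm U') (pV : V.Perm V') :
    Kd c U V = Kd c U' V' := by
  classical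
  have hlU : U'.length = U.length := pU.length_eq.symm
  have hlV : V'.length = V.length := pV.length_eq.symm
  have hUV' : V'.length = U'.length := by rw [hlV, hlU, hUV]
  rw [Kd_eq_Kf c U V hUV, Kd_eq_Kf c U' V' hUV', Kf_cast c hlU]
  have hUinj : Function.Injective U.get := List.nodup_iff_injective_get.mp hU
  have hVinj : Function.Injective V.get := List.nodup_iff_injective_get.mp hV
  have hU'nd : U'.Nodup := pU.nodup_iff.mp hU
  have hV'nd : V'.Nodup := pV.nodup_iff.mp hV
  -- construct σ
  have mkσ : ∀ (L L' : List ℂ), L.Nodup → L.Perm L' → ∀ (h : L'.length = L.length),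
      ∃ σ : Equiv.Perm (Fin L.length), ∀ j : Fin L.length, L.get (σ j) = L'.get (Fin.cast h.symm j) := by
    intro L L' hnd p h
    have hL'nd : L'.Nodup := p.nodup_iff.mp hnd
    have hmem : ∀ j : Fin L.length, L'.get (Fin.cast h.symm j) ∈ L := by
      intro j
      exact p.symm.subset (L'.get_mem _)
    set ι : Fin L.length → Fin L.length := fun j =>
      ⟨L.idxOf (L'.get (Fin.cast h.symm j)), List.idxOf_lt_length_iff.mpr (hmem j)⟩ with hι
    have hget : ∀ j, L.get (ι j) = L'.get (Fin.cast h.symm j) := by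
      intro j
      exact List.idxOf_get _
    have hinj : Function.Injective ι := by
      intro a b hab
      have : L'.get (Fin.cast h.symm a) = L'.get (Fin.cast h.symm b) := by
        rw [← hget a, ← hget b, hab]
      have := List.nodup_iff_injective_get.mp hL'nd this
      exact Fin.cast_injective _ (by exact this)
    exact ⟨Equiv.ofBijective ι (Finite.injective_iff_bijective.mp hinj),
      fun j => hget j⟩
  obtain ⟨σ, hσ⟩ := mkσ U U' hU pU hlU
  obtain ⟨τ₀, hτ₀⟩ := mkσ V V' hV pV hlV
  -- τ on Fin U.length via transfer
  set e : Fin V.length ≃ Fin U.length := finCongr hUV with he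
  set τ : Equiv.Perm (Fin U.length) := (e.symm.trans τ₀).trans e with hτ
  have goal1 : (U'.get ∘ Fin.cast hlU.symm) = U.get ∘ σ := by
    funext j
    exact (hσ j).symm
  have goal2 : ((fun k => V'.get (Fin.cast hUV'.symm k)) ∘ Fin.cast hlU.symm)
      = (fun k => V.get (Fin.cast hUV.symm k)) ∘ τ := by
    funext k
    simp only [Function.comp_apply, hτ, Equiv.trans_apply]
    have := hτ₀ (e.symm k)
    have h1 : V.get (τ₀ (e.symm k)) = V'.get (Fin.cast hlV.symm (e.symm k)) := this
    have h2 : Fin.cast hUV.symm (e (τ₀ (e.symm k))) = τ₀ (e.symm k) := rfl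
    rw [h2, h1]
    rfl
  rw [goal1, goal2]
  exact Eq.symm <| Kf_perm c U.length U.get (fun k => V.get (Fin.cast hUV.symm k)) hUinj
    (fun a b hab => by
      have := hVinj hab
      exact Fin.cast_injective _ this) σ τ

lemma Kd_aux (c : ℂ) (hc : c ≠ 0) :
    ∀ (P Q A B : List ℂ), A.length = B.length →
      (P ++ (Q ++ (A ++ B))).Nodup →
      Kd c (P ++ A) ((P ++ B).map (· + c)) =
        (-1 : ℂ) ^ (P.length + Q.length + A.length + B.length) *
          Kd c ((Q ++ A).map (· - c)) (Q ++ B) := by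
  intro P
  induction P with
  | nil =>
    intro Q
    induction Q with
    | nil =>
      intro A B hAB hnd
      simp only [List.nil_append, List.length_nil, Nat.zero_add]
      have hpow : ((-1 : ℂ)) ^ (A.length + B.length) = 1 := by
        rw [hAB, ← two_mul, pow_mul]
        norm_num
      rw [hpow, one_mul]
      have ht := Kd_translate c c (A.map (· - c)) B (by simp [hAB])
      rw [← ht]
      congr 1
      rw [List.map_map]
      have : ((· + c) ∘ (· - c)) = (id : ℂ → ℂ) := by
        funext z
        simp
      rw [this, List.map_id]
    | cons y Q' ihQ =>
      intro A B hAB hnd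
      simp only [List.nil_append] at hnd ⊢
      have hnd' : (Q' ++ (A ++ B)).Nodup := by
        have : (y :: (Q' ++ (A ++ B))).Nodup := hnd
        exact (List.nodup_cons.mp this).2
      have hx : y ∉ Q' ++ (A ++ B) := (List.nodup_cons.mp hnd).1
      have hred : Kd c (((y :: Q') ++ A).map (· - c)) ((y :: Q') ++ B)
          = - Kd c ((Q' ++ A).map (· - c)) (Q' ++ B) := by
        show Kd c ((y - c) :: (Q' ++ A).map (· - c)) (y :: (Q' ++ B)) = _
        apply Kd_reduce c hc y _ _ (by simp [hAB])
        · intro z hz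
          simp only [List.mem_map] at hz
          obtain ⟨t, ht', rfl⟩ := hz
          intro hcon
          have : t = y := by linear_combination hcon
          subst this
          simp only [List.mem_append] at ht' hx
          tauto
        · intro z hz
          intro hcon
          subst hcon
          simp only [List.mem_append] at hz hx
          tauto
      have ihQ' := ihQ A B hAB (by simpa using hnd')
      simp only [List.nil_append] at ihQ'
      rw [hred, ihQ']
      have hexp : List.length ([] : List ℂ) + (y :: Q').length + A.length + B.length
          = (List.length ([] : List ℂ) + Q'.length + A.length + B.length) + 1 := by
        simp only [List.length_cons, List.length_nil]
        omega
      rw [hexp, pow_succ]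
      ring
  | cons x P' ihP =>
    intro Q A B hAB hnd
    have hnd2 : (x :: (P' ++ (Q ++ (A ++ B)))).Nodup := hnd
    have hx : x ∉ P' ++ (Q ++ (A ++ B)) := (List.nodup_cons.mp hnd2).1
    have hnd' : (P' ++ (Q ++ (A ++ B))).Nodup := (List.nodup_cons.mp hnd2).2
    have hred : Kd c ((x :: P') ++ A) (((x :: P') ++ B).map (· + c))
        = - Kd c (P' ++ A) ((P' ++ B).map (· + c)) := by
      show Kd c (x :: (P' ++ A)) ((x + c) :: (P' ++ B).map (· + c)) = _
      apply Kd_reduce' c hc x _ _ (by simp [hAB])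
      · intro y hy
        intro hcon
        subst hcon
        simp only [List.mem_append] at hy hx
        tauto
      · intro y hy
        simp only [List.mem_map] at hy
        obtain ⟨t, ht', rfl⟩ := hy
        intro hcon
        have : t = x := by linear_combination hcon
        subst this
        simp only [List.mem_append] at ht' hx
        tauto
    rw [hred, ihP Q A B hAB hnd']
    have hexp : (x :: P').length + Q.length + A.length + B.length
        = (P'.length + Q.length + A.length + B.length) + 1 := by
      simp [List.length_cons]
      omega
    rw [hexp, pow_succ]
    ring

lemma subL_length (V : List ℂ) (S : Finset (Fin V.length)) : (subL V S).length = S.card := by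
  simp [subL, Finset.length_sort]

lemma subL_nodup (V : List ℂ) (hnd : V.Nodup) (S : Finset (Fin V.length)) :
    (subL V S).Nodup :=
  (Finset.sort_nodup _ _).map (List.nodup_iff_injective_get.mp hnd)

lemma subL_coe (V : List ℂ) (S : Finset (Fin V.length)) :
    ((subL V S : List ℂ) : Multiset ℂ) = S.val.map V.get := by
  unfold subL
  rw [← Multiset.map_coe, Finset.sort_eq]

lemma subL_perm_union (V : List ℂ) {S T : Finset (Fin V.length)} (h : Disjoint S T) :
    (subL V (S ∪ T)).Perm (subL V S ++ subL V T) := by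
  rw [← Multiset.coe_eq_coe]
  have : ((subL V S ++ subL V T : List ℂ) : Multiset ℂ)
      = (subL V S : Multiset ℂ) + (subL V T : Multiset ℂ) := rfl
  rw [this, subL_coe, subL_coe, subL_coe, ← Finset.disjUnion_eq_union S T h]
  rw [show (S.disjUnion T h).val = S.val + T.val from rfl, Multiset.map_add]

lemma mem_subL {V : List ℂ} {S : Finset (Fin V.length)} {x : ℂ} :
    x ∈ subL V S ↔ ∃ i ∈ S, V.get i = x := by
  simp [subL, List.mem_map, Finset.mem_sort]

lemma subL_disjoint (V : List ℂ) (hnd : V.Nodup) {S T : Finset (Fin V.length)}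
    (hST : Disjoint S T) : (subL V S).Disjoint (subL V T) := by
  intro x hx hy
  obtain ⟨i, hi, rfl⟩ := mem_subL.mp hx
  obtain ⟨i', hi', he⟩ := mem_subL.mp hy
  have : i' = i := List.nodup_iff_injective_get.mp hnd he
  subst this
  exact Finset.disjoint_left.mp hST hi hi'

/-- eq. (5.4): for two partitions `{v̄_α,v̄_ᾱ}` and `{v̄_β,v̄_β̄}` of `v̄`
with `|v̄_α| = |v̄_β| = n`, one has `K(v̄_α|v̄_β+c) = (−1)^b·K(v̄_β̄−c|v̄_ᾱ)`. -/
theorem stmt7 (c : ℂ) (hc : c ≠ 0) (b n : ℕ) (hn : n ≤ b) (V : List ℂ) (hV : V.length = b)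
    (Aα Aβ : Finset (Fin V.length)) (hα : Aα.card = n) (hβ : Aβ.card = n)
    (hgen : Generic c V) :
    Kd c (subL V Aα) ((subL V Aβ).map (· + c))
      = (-1 : ℂ) ^ b * Kd c ((subL V Aβᶜ).map (· - c)) (subL V Aαᶜ) := by
  classical
  subst hV
  have hndV : V.Nodup := List.Pairwise.imp (fun h => h.1) hgen
  set S1 := Aα ∩ Aβ with hS1
  set S2 := (Aα ∪ Aβ)ᶜ with hS2
  set S3 := Aα \ Aβ with hS3
  set S4 := Aβ \ Aα with hS4
  set PL := subL V S1 with hPL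
  set QL := subL V S2 with hQL
  set AL := subL V S3 with hAL
  set BL := subL V S4 with hBL
  -- cards
  have hc31 : S3.card + S1.card = n := by
    rw [hS3, hS1, Finset.card_sdiff_add_card_inter, hα]
  have hc41 : S4.card + S1.card = n := by
    rw [hS4, hS1, Finset.inter_comm, Finset.card_sdiff_add_card_inter, hβ]
  have hAB : AL.length = BL.length := by
    rw [hAL, hBL, subL_length, subL_length]
    omega
  -- disjointness of index sets
  have d13 : Disjoint S1 S3 := by
    rw [Finset.disjoint_left]
    intro i hi hj
    simp only [hS1, hS3, Finset.mem_inter, Finset.mem_sdiff] at hi hj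
    tauto
  have d14 : Disjoint S1 S4 := by
    rw [Finset.disjoint_left]
    intro i hi hj
    simp only [hS1, hS4, Finset.mem_inter, Finset.mem_sdiff] at hi hj
    tauto
  have d12 : Disjoint S1 S2 := by
    rw [Finset.disjoint_left]
    intro i hi hj
    simp only [hS1, hS2, Finset.mem_inter, Finset.mem_compl, Finset.mem_union] at hi hj
    tauto
  have d23 : Disjoint S2 S3 := by
    rw [Finset.disjoint_left]
    intro i hi hj
    simp only [hS2, hS3, Finset.mem_compl, Finset.mem_union, Finset.mem_sdiff] at hi hj
    tauto
  have d24 : Disjoint S2 S4 := by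
    rw [Finset.disjoint_left]
    intro i hi hj
    simp only [hS2, hS4, Finset.mem_compl, Finset.mem_union, Finset.mem_sdiff] at hi hj
    tauto
  have d34 : Disjoint S3 S4 := by
    rw [Finset.disjoint_left]
    intro i hi hj
    simp only [hS3, hS4, Finset.mem_sdiff] at hi hj
    tauto
  -- unions
  have f1 : S1 ∪ S3 = Aα := by
    rw [hS1, hS3, Finset.union_comm, Finset.sdiff_union_inter]
  have f2 : S1 ∪ S4 = Aβ := by
    rw [hS1, hS4, Finset.inter_comm, Finset.union_comm, Finset.sdiff_union_inter]
  have f3 : S2 ∪ S3 = Aβᶜ := by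
    ext i
    simp only [hS2, hS3, Finset.mem_union, Finset.mem_compl, Finset.mem_sdiff]
    by_cases h1 : i ∈ Aα <;> by_cases h2 : i ∈ Aβ <;> tauto
  have f4 : S2 ∪ S4 = Aαᶜ := by
    ext i
    simp only [hS2, hS4, Finset.mem_union, Finset.mem_compl, Finset.mem_sdiff]
    by_cases h1 : i ∈ Aα <;> by_cases h2 : i ∈ Aβ <;> tauto
  -- perms
  have perm1 : (subL V Aα).Perm (PL ++ AL) := by rw [← f1]; exact subL_perm_union V d13
  have perm2 : (subL V Aβ).Perm (PL ++ BL) := by rw [← f2]; exact subL_perm_union V d14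
  have perm3 : (subL V Aβᶜ).Perm (QL ++ AL) := by rw [← f3]; exact subL_perm_union V d23
  have perm4 : (subL V Aαᶜ).Perm (QL ++ BL) := by rw [← f4]; exact subL_perm_union V d24
  have hinj_add : Function.Injective (fun x : ℂ => x + c) := fun a b h => by
    simpa using congrArg (fun z => z - c) h
  have hinj_sub : Function.Injective (fun x : ℂ => x - c) := fun a b h => by
    simpa using congrArg (fun z => z + c) h
  -- step 1
  have step1 : Kd c (subL V Aα) ((subL V Aβ).map (· + c))
      = Kd c (PL ++ AL) ((PL ++ BL).map (· + c)) := by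
    apply Kd_perm c _ _ _ _ ?hlen ?nd1 ?nd2 perm1 (perm2.map _)
    case hlen => rw [List.length_map, subL_length, subL_length, hα, hβ]
    case nd1 => exact subL_nodup V hndV Aα
    case nd2 => exact (subL_nodup V hndV Aβ).map hinj_add
  -- nodup of big concat
  have ndP : PL.Nodup := subL_nodup V hndV S1
  have ndQ : QL.Nodup := subL_nodup V hndV S2
  have ndA : AL.Nodup := subL_nodup V hndV S3
  have ndB : BL.Nodup := subL_nodup V hndV S4
  have hndBig : (PL ++ (QL ++ (AL ++ BL))).Nodup := by
    rw [List.nodup_append']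
    refine ⟨ndP, ?_, ?_⟩
    · rw [List.nodup_append']
      refine ⟨ndQ, ?_, ?_⟩
      · rw [List.nodup_append']
        exact ⟨ndA, ndB, subL_disjoint V hndV d34⟩
      · rw [List.disjoint_append_right]
        exact ⟨subL_disjoint V hndV d23, subL_disjoint V hndV d24⟩
    · rw [List.disjoint_append_right, List.disjoint_append_right]
      exact ⟨subL_disjoint V hndV d12, subL_disjoint V hndV d13, subL_disjoint V hndV d14⟩
  -- step 2
  have step2 := Kd_aux c hc PL QL AL BL hAB hndBig
  -- step 3
  have step3 : Kd c ((QL ++ AL).map (· - c)) (QL ++ BL)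
      = Kd c ((subL V Aβᶜ).map (· - c)) (subL V Aαᶜ) := by
    apply Kd_perm c _ _ _ _ ?hlen ?nd1 ?nd2 ((perm3.symm).map _) perm4.symm
    case hlen =>
      rw [List.length_append, List.length_map, List.length_append]
      rw [hAB]
    case nd1 =>
      refine List.Nodup.map hinj_sub ?_
      exact (perm3.nodup_iff.mp (subL_nodup V hndV Aβᶜ))
    case nd2 => exact perm4.nodup_iff.mp (subL_nodup V hndV Aαᶜ)
  -- exponent
  have hcard24 : S2.card + S4.card = V.length - n := by
    have := Finset.card_union_of_disjoint d24
    rw [f4, Finset.card_compl, hα] at this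
    simp only [Fintype.card_fin] at this
    omega
  have hexp : PL.length + QL.length + AL.length + BL.length = V.length := by
    rw [hPL, hQL, hAL, hBL, subL_length, subL_length, subL_length, subL_length]
    omega
  rw [step1, step2, step3, hexp]
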